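/- For every complete multipartite graph there exists an optimal (minimum) strong geodetic set S such that for all but at most two parts X_i of the multipartition, the intersection S ∩ X_i is either empty or equals X_i. -/

import Mathlib

/-- A selection of fixed geodesics between pairs of vertices of `S`:
each element of `P` is a walk whose endpoints lie in `S`, which is a shortest path,
with at most one walk per ordered pair of endpoints, and with the walks chosen for
the two orderings of a pair being reverses of each other. -/
def IsGeodesicSelection {V : Type*} (G : SimpleGraph V) (S : Set V)
    (P : Set ((u : V) × (v : V) × G.Walk u v)) : Prop :=
  (∀ q ∈ P, q.1 ∈ S ∧ q.2.1 ∈ S ∧ q.2.2.IsPath ∧ q.2.2.length = G.dist q.1 q.2.1) ∧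
  (∀ q ∈ P, ∀ q' ∈ P,
    (q.1 = q'.1 ∧ q.2.1 = q'.2.1 → q = q') ∧
    (q.1 = q'.2.1 ∧ q.2.1 = q'.1 → q.2.2.support = q'.2.2.support.reverse))

/-- `S` is a strong geodetic set of `G` if one can fix one shortest path between
each pair of vertices of `S` so that all vertices of `G` are covered. -/
def IsStrongGeodeticSet {V : Type*} (G : SimpleGraph V) (S : Set V) : Prop :=
  ∃ P, IsGeodesicSelection G S P ∧ ∀ w : V, ∃ q ∈ P, w ∈ q.2.2.support

/-- The strong geodetic number: minimum size of a strong geodetic set. -/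
noncomputable def strongGeodeticNumber {V : Type*} (G : SimpleGraph V) : ℕ :=
  sInf {k | ∃ S : Set V, S.ncard = k ∧ IsStrongGeodeticSet G S}


set_option linter.unusedSectionVars false
set_option maxHeartbeats 1600000

open Finset SimpleGraph

section Numeric
variable {ι : Type*} [DecidableEq ι]

private lemma choose2_succ (m : ℕ) : (m+1).choose 2 = m.choose 2 + m := by
  rw [Nat.choose_succ_succ]
  simp [Nat.choose_one_right, Nat.add_comm]

private lemma choose2_big (m : ℕ) : 2*m < m.choose 2 + 4 := by
  rcases le_or_gt m 4 with h|h
  · interval_cases m <;> decide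
  · rw [Nat.choose_two_right]
    have h4 : 4*m ≤ m*(m-1) := by nlinarith [Nat.sub_add_cancel (by omega : 1 ≤ m)]
    have := Nat.div_le_div_right (c := 2) h4
    omega

variable [Fintype ι]

/-- Numeric feasibility of a size vector for complete multipartite SGS. -/
def NumFeas (n s : ι → ℕ) : Prop :=
  (∀ i, s i ≤ n i) ∧
  (∑ i, (n i - s i) ≤ ∑ i, (s i).choose 2) ∧
  (∀ j, n j - s j ≤ ∑ i ∈ univ.erase j, (s i).choose 2)

private lemma sum_decomp {T : Finset ι} {a y : ι} (ha : a ∈ T) (hy : y ∈ T) (hay : a ≠ y)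
    (f : ι → ℕ) :
    ∑ i ∈ T, f i = f a + f y + ∑ i ∈ (T.erase a).erase y, f i := by
  rw [← Finset.add_sum_erase T f ha,
    ← Finset.add_sum_erase _ f (Finset.mem_erase.mpr ⟨Ne.symm hay, hy⟩)]
  ring

private lemma num_move (n t : ι → ℕ) (h : NumFeas n t) {a y : ι} (hay : a ≠ y)
    (ha1 : 1 ≤ t a) (hsa : t a ≤ t y) (hy : t y < n y)
    (hslack : n y - t y + t a ≤ (∑ i ∈ univ.erase y, (t i).choose 2) + 2) :
    ∃ t', NumFeas n t' ∧ (∑ i, t' i = ∑ i, t i) ∧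
      ∑ i, (t i).choose 2 < ∑ i, (t' i).choose 2 := by
  obtain ⟨hle, htot, hpart⟩ := h
  set t' : ι → ℕ := fun i => if i = a then t a - 1 else if i = y then t y + 1 else t i with ht'
  have ht'a : t' a = t a - 1 := by simp [ht']
  have ht'y : t' y = t y + 1 := by simp [ht', Ne.symm hay]
  have ht'o : ∀ i, i ≠ a → i ≠ y → t' i = t i := by intro i h1 h2; simp [ht', h1, h2]
  have hc2a : (t a).choose 2 = (t a - 1).choose 2 + (t a - 1) := by
    have h1 := choose2_succ (t a - 1)
    rw [show t a - 1 + 1 = t a by omega] at h1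
    exact h1
  have hc2y : (t y + 1).choose 2 = (t y).choose 2 + t y := choose2_succ _
  have erest : ∑ i ∈ (univ.erase a).erase y, (t' i).choose 2
      = ∑ i ∈ (univ.erase a).erase y, (t i).choose 2 := by
    refine Finset.sum_congr rfl fun i hi => ?_
    rw [Finset.mem_erase, Finset.mem_erase] at hi
    rw [ht'o i hi.2.1 hi.1]
  have eP' : ∑ i, (t' i).choose 2 = (t' a).choose 2 + (t' y).choose 2
      + ∑ i ∈ (univ.erase a).erase y, (t i).choose 2 := by
    rw [sum_decomp (mem_univ a) (mem_univ y) hay (fun i => (t' i).choose 2), erest]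
  have eP : ∑ i, (t i).choose 2 = (t a).choose 2 + (t y).choose 2
      + ∑ i ∈ (univ.erase a).erase y, (t i).choose 2 :=
    sum_decomp (mem_univ a) (mem_univ y) hay (fun i => (t i).choose 2)
  rw [ht'a, ht'y, hc2y] at eP'
  refine ⟨t', ⟨?_, ?_, ?_⟩, ?_, ?_⟩
  · intro i
    by_cases hia : i = a
    · subst hia; rw [ht'a]; exact le_trans (Nat.sub_le _ _) (hle i)
    by_cases hiy : i = y
    · subst hiy; rw [ht'y]; omega
    · rw [ht'o i hia hiy]; exact hle i
  · -- total
    have e1 : ∑ i, (n i - t' i) = (n a - t' a) + (n y - t' y)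
        + ∑ i ∈ (univ.erase a).erase y, (n i - t' i) :=
      sum_decomp (mem_univ a) (mem_univ y) hay (fun i => n i - t' i)
    have e2 : ∑ i, (n i - t i) = (n a - t a) + (n y - t y)
        + ∑ i ∈ (univ.erase a).erase y, (n i - t i) :=
      sum_decomp (mem_univ a) (mem_univ y) hay (fun i => n i - t i)
    have e3 : ∑ i ∈ (univ.erase a).erase y, (n i - t' i)
        = ∑ i ∈ (univ.erase a).erase y, (n i - t i) := by
      refine Finset.sum_congr rfl fun i hi => ?_
      rw [Finset.mem_erase, Finset.mem_erase] at hi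
      rw [ht'o i hi.2.1 hi.1]
    rw [ht'a, ht'y] at e1
    have hna := hle a
    omega
  · -- per part
    intro j
    by_cases hja : j = a
    · subst hja
      have e1 : ∑ i ∈ univ.erase j, (t' i).choose 2
          = (t' y).choose 2 + ∑ i ∈ (univ.erase j).erase y, (t' i).choose 2 :=
        (Finset.add_sum_erase _ _ (Finset.mem_erase.mpr ⟨Ne.symm hay, mem_univ y⟩)).symm
      have e2 : ∑ i ∈ univ.erase j, (t i).choose 2
          = (t y).choose 2 + ∑ i ∈ (univ.erase j).erase y, (t i).choose 2 :=
        (Finset.add_sum_erase _ _ (Finset.mem_erase.mpr ⟨Ne.symm hay, mem_univ y⟩)).symm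
      have e3 : ∑ i ∈ (univ.erase j).erase y, (t' i).choose 2
          = ∑ i ∈ (univ.erase j).erase y, (t i).choose 2 := by
        refine Finset.sum_congr rfl fun i hi => ?_
        rw [Finset.mem_erase, Finset.mem_erase] at hi
        rw [ht'o i hi.2.1 hi.1]
      have hp := hpart j
      rw [ht'y, hc2y] at e1
      rw [ht'a]
      omega
    by_cases hjy : j = y
    · subst hjy
      have e1 : ∑ i ∈ univ.erase j, (t' i).choose 2
          = (t' a).choose 2 + ∑ i ∈ (univ.erase j).erase a, (t' i).choose 2 :=
        (Finset.add_sum_erase _ _ (Finset.mem_erase.mpr ⟨hay, mem_univ a⟩)).symm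
      have e2 : ∑ i ∈ univ.erase j, (t i).choose 2
          = (t a).choose 2 + ∑ i ∈ (univ.erase j).erase a, (t i).choose 2 :=
        (Finset.add_sum_erase _ _ (Finset.mem_erase.mpr ⟨hay, mem_univ a⟩)).symm
      have e3 : ∑ i ∈ (univ.erase j).erase a, (t' i).choose 2
          = ∑ i ∈ (univ.erase j).erase a, (t i).choose 2 := by
        refine Finset.sum_congr rfl fun i hi => ?_
        rw [Finset.mem_erase, Finset.mem_erase] at hi
        rw [ht'o i hi.1 hi.2.1]
      rw [ht'a] at e1
      rw [ht'y]
      omega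
    · have haj : a ∈ univ.erase j := Finset.mem_erase.mpr ⟨fun h => hja h.symm, mem_univ a⟩
      have hyj : y ∈ univ.erase j := Finset.mem_erase.mpr ⟨fun h => hjy h.symm, mem_univ y⟩
      have e1 : ∑ i ∈ univ.erase j, (t' i).choose 2 = (t' a).choose 2 + (t' y).choose 2
          + ∑ i ∈ ((univ.erase j).erase a).erase y, (t' i).choose 2 :=
        sum_decomp haj hyj hay (fun i => (t' i).choose 2)
      have e2 : ∑ i ∈ univ.erase j, (t i).choose 2 = (t a).choose 2 + (t y).choose 2
          + ∑ i ∈ ((univ.erase j).erase a).erase y, (t i).choose 2 :=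
        sum_decomp haj hyj hay (fun i => (t i).choose 2)
      have e3 : ∑ i ∈ ((univ.erase j).erase a).erase y, (t' i).choose 2
          = ∑ i ∈ ((univ.erase j).erase a).erase y, (t i).choose 2 := by
        refine Finset.sum_congr rfl fun i hi => ?_
        rw [Finset.mem_erase, Finset.mem_erase, Finset.mem_erase] at hi
        rw [ht'o i hi.2.1 hi.1]
      have hp := hpart j
      have ht'j : t' j = t j := ht'o j hja hjy
      rw [ht'a, ht'y, hc2y] at e1
      rw [ht'j]
      omega
  · -- sum preserved
    have e1 : ∑ i, t' i = t' a + t' y + ∑ i ∈ (univ.erase a).erase y, t' i :=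
      sum_decomp (mem_univ a) (mem_univ y) hay t'
    have e2 : ∑ i, t i = t a + t y + ∑ i ∈ (univ.erase a).erase y, t i :=
      sum_decomp (mem_univ a) (mem_univ y) hay t
    have e3 : ∑ i ∈ (univ.erase a).erase y, t' i = ∑ i ∈ (univ.erase a).erase y, t i := by
      refine Finset.sum_congr rfl fun i hi => ?_
      rw [Finset.mem_erase, Finset.mem_erase] at hi
      rw [ht'o i hi.2.1 hi.1]
    rw [ht'a, ht'y] at e1
    omega
  · -- P increases
    omega

lemma num_exchange (n s : ι → ℕ) (h : NumFeas n s) :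
    ∃ s', NumFeas n s' ∧ (∑ i, s' i = ∑ i, s i) ∧
      #(univ.filter fun i => 0 < s' i ∧ s' i < n i) ≤ 2 := by
  classical
  set F : Set (ι → ℕ) := {t | NumFeas n t ∧ ∑ i, t i = ∑ i, s i} with hF
  have hFfin : F.Finite := by
    have hsub : F ⊆ Set.pi Set.univ (fun i => Set.Iic (n i)) := by
      intro t ht i _
      exact ht.1.1 i
    exact Set.Finite.subset (Set.Finite.pi fun i => Set.finite_Iic _) hsub
  have hFne : s ∈ F := ⟨h, rfl⟩
  obtain ⟨t, htF, hmax⟩ := Set.Finite.exists_maximalFor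
    (fun t => ∑ i, (t i).choose 2) F hFfin ⟨s, hFne⟩
  refine ⟨t, htF.1, htF.2, ?_⟩
  by_contra hcon
  push_neg at hcon
  obtain ⟨T, hTsub, hT3⟩ := Finset.exists_subset_card_eq hcon
  obtain ⟨a0, b0, c0, hab, hac, hbc, rfl⟩ := Finset.card_eq_three.mp hT3
  obtain ⟨a, haT, hamin⟩ := Finset.exists_min_image ({a0, b0, c0} : Finset ι) t ⟨a0, by simp⟩
  have hpartial : ∀ i ∈ ({a0, b0, c0} : Finset ι), 0 < t i ∧ t i < n i := by
    intro i hi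
    have := hTsub hi
    simpa using (Finset.mem_filter.mp this).2
  have hcard : #(({a0, b0, c0} : Finset ι).erase a) = 2 := by
    rw [Finset.card_erase_of_mem haT,
      Finset.card_eq_three.mpr ⟨a0, b0, c0, hab, hac, hbc, rfl⟩]
  obtain ⟨b, c, hbc', hbcpair⟩ := Finset.card_eq_two.mp hcard
  have hbmem : b ∈ ({a0, b0, c0} : Finset ι).erase a := by rw [hbcpair]; simp
  have hcmem : c ∈ ({a0, b0, c0} : Finset ι).erase a := by rw [hbcpair]; simp
  have hbT := Finset.mem_of_mem_erase hbmem
  have hcT := Finset.mem_of_mem_erase hcmem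
  have hba : b ≠ a := (Finset.mem_erase.mp hbmem).1
  have hca : c ≠ a := (Finset.mem_erase.mp hcmem).1
  have key : ∀ y, y ∈ ({a0, b0, c0} : Finset ι) → y ≠ a →
      (∑ i ∈ univ.erase y, (t i).choose 2) + 3 ≤ (n y - t y) + t a := by
    intro y hyT hya
    by_contra hk
    push_neg at hk
    have hslack : n y - t y + t a ≤ (∑ i ∈ univ.erase y, (t i).choose 2) + 2 := by omega
    obtain ⟨t', ht'F, ht'sum, ht'lt⟩ := num_move n t htF.1 (Ne.symm hya)
      (hpartial a haT).1 (hamin y hyT) (hpartial y hyT).2 hslack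
    have hmem : t' ∈ F := ⟨ht'F, by rw [ht'sum, htF.2]⟩
    have : ∑ i, (t' i).choose 2 ≤ ∑ i, (t i).choose 2 := hmax hmem (le_of_lt ht'lt)
    omega
  have hkb := key b hbT hba
  have hkc := key c hcT hca
  have eb : ∑ i ∈ univ.erase b, (t i).choose 2 + (t b).choose 2 = ∑ i, (t i).choose 2 :=
    Finset.sum_erase_add _ _ (mem_univ b)
  have ec : ∑ i ∈ univ.erase c, (t i).choose 2 + (t c).choose 2 = ∑ i, (t i).choose 2 :=
    Finset.sum_erase_add _ _ (mem_univ c)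
  have habc : (∑ i ∈ ({a, b, c} : Finset ι), (t i).choose 2) ≤ ∑ i, (t i).choose 2 :=
    Finset.sum_le_sum_of_subset (Finset.subset_univ _)
  have habc' : ∑ i ∈ ({a, b, c} : Finset ι), (t i).choose 2
      = (t a).choose 2 + (t b).choose 2 + (t c).choose 2 := by
    rw [Finset.sum_insert (by simp [Ne.symm hba, Ne.symm hca]),
      Finset.sum_insert (by simp [hbc']), Finset.sum_singleton]
    ring
  have hdbc : (n b - t b) + (n c - t c) ≤ ∑ i, (n i - t i) := by
    have h2 : (∑ i ∈ ({b, c} : Finset ι), (n i - t i)) ≤ ∑ i, (n i - t i) :=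
      Finset.sum_le_sum_of_subset (Finset.subset_univ _)
    rwa [Finset.sum_insert (by simp [hbc']), Finset.sum_singleton] at h2
  have htot := htF.1.2.1
  have hbig := choose2_big (t a)
  omega

end Numeric

section GraphAux
variable {ι : Type*} {V : ι → Type*}
variable {ι : Type*} {V : ι → Type*}

private lemma cmp_adj (u v : Σ i, V i) :
    (completeMultipartiteGraph V).Adj u v ↔ u.1 ≠ v.1 := by
  simp [completeMultipartiteGraph]

private lemma support_len0 {W : Type*} {G : SimpleGraph W} {x y : W} (p : G.Walk x y)
    (h : p.length = 0) : p.support = [x] := by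
  cases p with
  | nil => rfl
  | cons h' p' => simp [SimpleGraph.Walk.length_cons] at h

private lemma support_len1 {W : Type*} {G : SimpleGraph W} {x y : W} (p : G.Walk x y)
    (h : p.length = 1) : p.support = [x, y] := by
  cases p with
  | nil => simp at h
  | cons h' p' =>
    have h0 : p'.length = 0 := by simpa using h
    have := SimpleGraph.Walk.eq_of_length_eq_zero h0
    subst this
    rw [SimpleGraph.Walk.support_cons, support_len0 p' h0]

private lemma support_len2 {W : Type*} {G : SimpleGraph W} {x y : W} (p : G.Walk x y)
    (h : p.length = 2) : ∃ m, p.support = [x, m, y] ∧ G.Adj x m ∧ G.Adj m y := by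
  cases p with
  | nil => simp at h
  | cons h' p' =>
    have h1 : p'.length = 1 := by simpa using h
    cases p' with
    | nil => simp at h1
    | cons h'' p'' =>
      have h0 : p''.length = 0 := by simpa using h1
      have := SimpleGraph.Walk.eq_of_length_eq_zero h0
      subst this
      refine ⟨_, ?_, h', ?_⟩
      · rw [SimpleGraph.Walk.support_cons, SimpleGraph.Walk.support_cons, support_len0 p'' h0]
      · exact h''

private lemma exists_adj_of_len_pos {W : Type*} {G : SimpleGraph W} {x y : W} (p : G.Walk x y)
    (h : 0 < p.length) : ∃ m, G.Adj x m := by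
  cases p with
  | nil => simp at h
  | cons h' p' => exact ⟨_, h'⟩

private lemma dist_two (u v : Σ i, V i) (h1 : u ≠ v) (h2 : u.1 = v.1) (w : Σ i, V i)
    (hw : w.1 ≠ u.1) : (completeMultipartiteGraph V).dist u v = 2 := by
  set G := completeMultipartiteGraph V with hG
  have a1 : G.Adj u w := (cmp_adj u w).mpr (Ne.symm hw)
  have a2 : G.Adj w v := (cmp_adj w v).mpr (by rw [← h2]; exact hw)
  have p : G.Walk u v := .cons a1 (.cons a2 .nil)
  have hle : G.dist u v ≤ 2 := by
    have h3 := SimpleGraph.dist_le (Walk.cons a1 (Walk.cons a2 Walk.nil))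
    simpa using h3
  have hne0 : G.dist u v ≠ 0 := fun h0 =>
    h1 ((SimpleGraph.Reachable.dist_eq_zero_iff ⟨p⟩).mp h0)
  have hne1 : G.dist u v ≠ 1 := by
    intro hd
    have := (cmp_adj u v).mp (SimpleGraph.dist_eq_one_iff_adj.mp hd)
    exact this h2
  omega

/-- structure of a covering geodesic through a vertex outside `S` -/
private lemma sgs_walk_structure {S : Set (Σ i, V i)}
    {P : Set ((u : Σ i, V i) × (v : Σ i, V i) × (completeMultipartiteGraph V).Walk u v)}
    (hsel : IsGeodesicSelection (completeMultipartiteGraph V) S P)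
    {q} (hq : q ∈ P) {w : Σ i, V i} (hw : w ∈ q.2.2.support) (hwS : w ∉ S) :
    q.1 ∈ S ∧ q.2.1 ∈ S ∧ q.1 ≠ q.2.1 ∧ q.1.1 = q.2.1.1 ∧ w.1 ≠ q.1.1 ∧
      q.2.2.support = [q.1, w, q.2.1] := by
  obtain ⟨u, v, p⟩ := q
  obtain ⟨huS, hvS, hpath, hlen⟩ := hsel.1 _ hq
  simp only at huS hvS hpath hlen hw ⊢
  have hwu : w ≠ u := fun h => hwS (h ▸ huS)
  have hwv : w ≠ v := fun h => hwS (h ▸ hvS)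
  have hlen0 : p.length ≠ 0 := by
    intro h0
    have := support_len0 _ h0
    rw [this] at hw
    simp at hw
    exact hwu hw
  have hlen1 : p.length ≠ 1 := by
    intro h1
    have := support_len1 _ h1
    rw [this] at hw
    simp at hw
    rcases hw with h|h
    exacts [hwu h, hwv h]
  have hlen2 : 2 ≤ p.length := by omega
  obtain ⟨m, hm⟩ := exists_adj_of_len_pos p (by omega)
  have hne : u ≠ v := by
    intro h
    have hd0 : (completeMultipartiteGraph V).dist u v = 0 := by
      rw [h]; exact SimpleGraph.dist_self
    omega
  have hsame : u.1 = v.1 := by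
    by_contra hd
    have := SimpleGraph.dist_eq_one_iff_adj.mpr ((cmp_adj u v).mpr hd)
    omega
  have hd2 : (completeMultipartiteGraph V).dist u v = 2 :=
    dist_two u v hne hsame m (Ne.symm ((cmp_adj _ _).mp hm))
  have hlen2' : p.length = 2 := by omega
  obtain ⟨m', hsupp, ha1, ha2⟩ := support_len2 p hlen2'
  have hwm : w = m' := by
    rw [hsupp] at hw
    simp at hw
    rcases hw with h|h|h
    exacts [absurd h hwu, h, absurd h hwv]
  subst hwm
  exact ⟨huS, hvS, hne, hsame, Ne.symm ((cmp_adj _ _).mp ha1), hsupp⟩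

end GraphAux

section Count
variable {ι : Type*} [Fintype ι] [DecidableEq ι] {V : ι → Type*} [∀ i, Fintype (V i)]
  [∀ i, DecidableEq (V i)]
  [∀ i, DecidableEq (V i)]

private lemma card_part (i : ι) :
    #((univ : Finset (Σ j, V j)).filter (fun v => v.1 = i)) = Fintype.card (V i) := by
  have h : (univ : Finset (Σ j, V j)).filter (fun v => v.1 = i)
      = (univ : Finset (V i)).map ⟨Sigma.mk i, sigma_mk_injective⟩ := by
    ext ⟨j, a⟩
    simp only [Finset.mem_filter, Finset.mem_univ, true_and, Finset.mem_map,
      Function.Embedding.coeFn_mk]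
    constructor
    · rintro rfl; exact ⟨a, rfl⟩
    · rintro ⟨b, hb⟩; cases hb; rfl
  rw [h, Finset.card_map, Finset.card_univ]

private lemma card_fiber_sum (S : Finset (Σ i, V i)) :
    #S = ∑ i, #(S.filter fun v => v.1 = i) :=
  Finset.card_eq_sum_card_fiberwise (fun x _ => mem_univ x.1)

private lemma pairs_disjoint (S : Finset (Σ i, V i)) {i j : ι} (hij : i ≠ j) :
    Disjoint ((S.filter fun v => v.1 = i).powersetCard 2)
      ((S.filter fun v => v.1 = j).powersetCard 2) := by
  rw [Finset.disjoint_left]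
  intro e hei hej
  rw [Finset.mem_powersetCard] at hei hej
  obtain ⟨x, hx⟩ := Finset.card_pos.mp (by rw [hei.2]; omega)
  have h1 := (Finset.mem_filter.mp (hei.1 hx)).2
  have h2 := (Finset.mem_filter.mp (hej.1 hx)).2
  exact hij (h1 ▸ h2 ▸ rfl)

private lemma card_pairs_biUnion (S : Finset (Σ i, V i)) (T : Finset ι) :
    #(T.biUnion fun i => (S.filter fun v => v.1 = i).powersetCard 2)
      = ∑ i ∈ T, (#(S.filter fun v => v.1 = i)).choose 2 := by
  rw [Finset.card_biUnion]
  · exact Finset.sum_congr rfl fun i _ => Finset.card_powersetCard 2 _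
  · exact fun i _ j _ hij => pairs_disjoint S hij


lemma feas_of_sgs (S : Finset (Σ i, V i))
    (h : IsStrongGeodeticSet (completeMultipartiteGraph V) ↑S) :
    NumFeas (fun i => Fintype.card (V i)) (fun i => #(S.filter fun v => v.1 = i)) := by
  obtain ⟨P, hsel, hcover⟩ := h
  choose q hqP hqw using hcover
  set g : (Σ i, V i) → Finset (Σ i, V i) := fun w => {(q w).1, (q w).2.1} with hg
  have hstr : ∀ w : Σ i, V i, w ∉ S →
      (q w).1 ∈ (↑S : Set (Σ i, V i)) ∧ (q w).2.1 ∈ (↑S : Set (Σ i, V i)) ∧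
      (q w).1 ≠ (q w).2.1 ∧ (q w).1.1 = (q w).2.1.1 ∧ w.1 ≠ (q w).1.1 ∧
      (q w).2.2.support = [(q w).1, w, (q w).2.1] :=
    fun w hw => sgs_walk_structure hsel (hqP w) (hqw w) (fun hc => hw (Finset.mem_coe.mp hc))
  have hinj : ∀ w₁, w₁ ∉ S → ∀ w₂, w₂ ∉ S → g w₁ = g w₂ → w₁ = w₂ := by
    intro w₁ h1 w₂ h2 heq
    obtain ⟨hu1, hv1, hne1, hsame1, hw1, hsupp1⟩ := hstr w₁ h1
    obtain ⟨hu2, hv2, hne2, hsame2, hw2, hsupp2⟩ := hstr w₂ h2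
    have h1m : (q w₁).1 = (q w₂).1 ∨ (q w₁).1 = (q w₂).2.1 := by
      have hm : (q w₁).1 ∈ g w₂ := by rw [← heq, hg]; simp
      simpa [hg] using hm
    have h2m : (q w₁).2.1 = (q w₂).1 ∨ (q w₁).2.1 = (q w₂).2.1 := by
      have hm : (q w₁).2.1 ∈ g w₂ := by rw [← heq, hg]; simp
      simpa [hg] using hm
    have hcase : ((q w₁).1 = (q w₂).1 ∧ (q w₁).2.1 = (q w₂).2.1) ∨
        ((q w₁).1 = (q w₂).2.1 ∧ (q w₁).2.1 = (q w₂).1) := by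
      rcases h1m with h1m|h1m <;> rcases h2m with h2m|h2m
      · exact absurd (h1m.trans h2m.symm) hne1
      · exact Or.inl ⟨h1m, h2m⟩
      · exact Or.inr ⟨h1m, h2m⟩
      · exact absurd (h1m.trans h2m.symm) hne1
    rcases hcase with ⟨ha, hb⟩|⟨ha, hb⟩
    · have hqq := (hsel.2 (q w₁) (hqP w₁) (q w₂) (hqP w₂)).1 ⟨ha, hb⟩
      rw [hqq, hsupp2] at hsupp1
      simpa using hsupp1.symm
    · have hss := (hsel.2 (q w₁) (hqP w₁) (q w₂) (hqP w₂)).2 ⟨ha, hb⟩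
      rw [hsupp1, hsupp2] at hss
      simp at hss
      exact hss.2.1
  have hpt : ∀ i, #(S.filter fun v => v.1 = i) ≤ Fintype.card (V i) := by
    intro i
    rw [← card_part i]
    exact Finset.card_le_card (Finset.filter_subset_filter _ (Finset.subset_univ S))
  have hSsum : #S = ∑ i, #(S.filter fun v => v.1 = i) :=
    Finset.card_eq_sum_card_fiberwise (fun x _ => mem_univ x.1)
  have hUsum : #(univ : Finset (Σ i, V i)) = ∑ i, Fintype.card (V i) := by
    rw [Finset.card_eq_sum_card_fiberwise (f := Sigma.fst) (t := univ) (fun x _ => mem_univ x.1)]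
    exact Finset.sum_congr rfl fun i _ => card_part i
  refine ⟨hpt, ?_, ?_⟩
  · -- total
    show ∑ i, (Fintype.card (V i) - #(S.filter fun v => v.1 = i))
      ≤ ∑ i, (#(S.filter fun v => v.1 = i)).choose 2
    have hcard1 : #((univ : Finset (Σ i, V i)) \ S) ≤
        #(univ.biUnion fun i => (S.filter fun v => v.1 = i).powersetCard 2) := by
      apply Finset.card_le_card_of_injOn g
      · intro w hw
        rw [Finset.mem_coe, Finset.mem_sdiff] at hw
        obtain ⟨hu, hv, hne, hsame, hwp, hsupp⟩ := hstr w hw.2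
        rw [Finset.mem_coe, Finset.mem_biUnion]
        refine ⟨(q w).1.1, mem_univ _, ?_⟩
        rw [Finset.mem_powersetCard]
        constructor
        · intro x hx
          rw [hg] at hx
          simp only [Finset.mem_insert, Finset.mem_singleton] at hx
          rcases hx with rfl|rfl
          · exact Finset.mem_filter.mpr ⟨Finset.mem_coe.mp hu, rfl⟩
          · exact Finset.mem_filter.mpr ⟨Finset.mem_coe.mp hv, hsame.symm⟩
        · exact Finset.card_pair hne
      · intro w1 hw1 w2 hw2 heq
        exact hinj w1 (Finset.mem_sdiff.mp hw1).2 w2 (Finset.mem_sdiff.mp hw2).2 heq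
    rw [card_pairs_biUnion S univ, Finset.card_sdiff_of_subset (Finset.subset_univ S)] at hcard1
    have hsplit : ∑ i, ((Fintype.card (V i) - #(S.filter fun v => v.1 = i))
        + #(S.filter fun v => v.1 = i)) = ∑ i, Fintype.card (V i) :=
      Finset.sum_congr rfl fun i _ => Nat.sub_add_cancel (hpt i)
    rw [Finset.sum_add_distrib] at hsplit
    omega
  · -- per part
    intro j
    show Fintype.card (V j) - #(S.filter fun v => v.1 = j)
      ≤ ∑ i ∈ univ.erase j, (#(S.filter fun v => v.1 = i)).choose 2
    have hcard1 : #(((univ : Finset (Σ i, V i)).filter fun v => v.1 = j) \ S) ≤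
        #((univ.erase j).biUnion fun i => (S.filter fun v => v.1 = i).powersetCard 2) := by
      apply Finset.card_le_card_of_injOn g
      · intro w hw
        rw [Finset.mem_coe, Finset.mem_sdiff, Finset.mem_filter] at hw
        obtain ⟨hu, hv, hne, hsame, hwp, hsupp⟩ := hstr w hw.2
        rw [Finset.mem_coe, Finset.mem_biUnion]
        refine ⟨(q w).1.1, ?_, ?_⟩
        · exact Finset.mem_erase.mpr ⟨fun hh => hwp (hw.1.2.symm ▸ hh.symm ▸ rfl), mem_univ _⟩
        rw [Finset.mem_powersetCard]
        constructor
        · intro x hx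
          rw [hg] at hx
          simp only [Finset.mem_insert, Finset.mem_singleton] at hx
          rcases hx with rfl|rfl
          · exact Finset.mem_filter.mpr ⟨Finset.mem_coe.mp hu, rfl⟩
          · exact Finset.mem_filter.mpr ⟨Finset.mem_coe.mp hv, hsame.symm⟩
        · exact Finset.card_pair hne
      · intro w1 hw1 w2 hw2 heq
        exact hinj w1 (Finset.mem_sdiff.mp hw1).2 w2 (Finset.mem_sdiff.mp hw2).2 heq
    rw [card_pairs_biUnion S (univ.erase j)] at hcard1
    have hps : ((univ : Finset (Σ i, V i)).filter fun v => v.1 = j) ∩ S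
        = S.filter (fun v => v.1 = j) := by
      ext v
      simp only [Finset.mem_inter, Finset.mem_filter, Finset.mem_univ, true_and]
      tauto
    have hpc := Finset.card_sdiff_add_card_inter
      ((univ : Finset (Σ i, V i)).filter fun v => v.1 = j) S
    rw [hps, card_part j] at hpc
    omega


lemma sgs_of_feas (s : ι → ℕ) (hle : ∀ i, s i ≤ Fintype.card (V i))
    (htot : ∑ i, (Fintype.card (V i) - s i) ≤ ∑ i, (s i).choose 2)
    (hpart : ∀ j, Fintype.card (V j) - s j ≤ ∑ i ∈ univ.erase j, (s i).choose 2) :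
    ∃ S : Finset (Σ i, V i), IsStrongGeodeticSet (completeMultipartiteGraph V) ↑S ∧
      ∀ i, #(S.filter fun v => v.1 = i) = s i := by
  have hA : ∀ i, ∃ A : Finset (V i), A ⊆ univ ∧ #A = s i := fun i =>
    Finset.exists_subset_card_eq (by simpa using hle i)
  choose A hA1 hA2 using hA
  set S : Finset (Σ i, V i) := univ.sigma (fun i => A i) with hS
  have hfilter : ∀ i, S.filter (fun v => v.1 = i)
      = (A i).map ⟨Sigma.mk i, sigma_mk_injective⟩ := by
    intro i; ext ⟨j, a⟩
    simp only [hS, Finset.mem_filter, Finset.mem_sigma, Finset.mem_univ, true_and,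
      Finset.mem_map, Function.Embedding.coeFn_mk]
    constructor
    · rintro ⟨ha, rfl⟩; exact ⟨a, ha, rfl⟩
    · rintro ⟨b, hb, hbe⟩; cases hbe; exact ⟨hb, rfl⟩
  have hcards : ∀ i, #(S.filter fun v => v.1 = i) = s i := fun i => by
    rw [hfilter i, Finset.card_map, hA2 i]
  refine ⟨S, ?_, hcards⟩
  -- Hall's condition
  set D : Finset (Σ i, V i) := univ \ S with hD
  set pairs : ι → Finset (Finset (Σ i, V i)) :=
    fun i => (S.filter fun v => v.1 = i).powersetCard 2 with hpairs
  set t : {x // x ∈ D} → Finset (Finset (Σ i, V i)) :=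
    fun x => (univ.erase x.1.1).biUnion pairs with ht
  have hps : ∀ j, ((univ : Finset (Σ i, V i)).filter fun v => v.1 = j) ∩ S
      = S.filter (fun v => v.1 = j) := by
    intro j; ext v
    simp only [Finset.mem_inter, Finset.mem_filter, Finset.mem_univ, true_and]
    tauto
  have hDpart : ∀ j, #(((univ : Finset (Σ i, V i)).filter fun v => v.1 = j) \ S)
      = Fintype.card (V j) - s j := by
    intro j
    have hpc := Finset.card_sdiff_add_card_inter
      ((univ : Finset (Σ i, V i)).filter fun v => v.1 = j) S
    rw [hps, card_part j, hcards j] at hpc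
    omega
  have hUsum : #(univ : Finset (Σ i, V i)) = ∑ i, Fintype.card (V i) := by
    rw [Finset.card_eq_sum_card_fiberwise (f := Sigma.fst) (t := univ) (fun x _ => mem_univ x.1)]
    exact Finset.sum_congr rfl fun i _ => card_part i
  have hSsum : #S = ∑ i, s i := by
    rw [Finset.card_eq_sum_card_fiberwise (f := Sigma.fst) (t := univ) (fun x _ => mem_univ x.1)]
    exact Finset.sum_congr rfl fun i _ => hcards i
  have hall : ∀ B : Finset {x // x ∈ D}, #B ≤ #(B.biUnion t) := by
    intro B
    rcases Finset.eq_empty_or_nonempty B with rfl|⟨x0, hx0⟩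
    · simp
    by_cases hsame : ∀ x ∈ B, x.1.1 = x0.1.1
    · -- all in the same part j
      set j := x0.1.1 with hj
      have h1 : #B ≤ #(((univ : Finset (Σ i, V i)).filter fun v => v.1 = j) \ S) := by
        apply Finset.card_le_card_of_injOn (fun x => x.1)
        · intro x hx
          have hxD : (x : Σ i, V i) ∈ univ \ S := x.2
          exact Finset.mem_sdiff.mpr ⟨Finset.mem_filter.mpr ⟨mem_univ _,
            hsame x hx⟩, (Finset.mem_sdiff.mp hxD).2⟩
        · intro a _ b _ hab
          exact Subtype.ext hab
      have h4 : #(t x0) = ∑ i ∈ univ.erase j, (s i).choose 2 := by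
        rw [ht, hpairs, card_pairs_biUnion S (univ.erase j)]
        exact Finset.sum_congr rfl fun i _ => by rw [hcards i]
      have h5 : t x0 ⊆ B.biUnion t := Finset.subset_biUnion_of_mem t hx0
      have h6 := Finset.card_le_card h5
      have h7 := hpart j
      rw [hDpart j] at h1
      omega
    · -- two different parts
      push_neg at hsame
      obtain ⟨x1, hx1, hx1ne⟩ := hsame
      have hsub : (univ.biUnion pairs) ⊆ B.biUnion t := by
        intro e he
        rw [Finset.mem_biUnion] at he
        obtain ⟨i, -, hei⟩ := he
        rw [Finset.mem_biUnion]
        by_cases hi0 : i = x0.1.1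
        · refine ⟨x1, hx1, ?_⟩
          rw [ht, Finset.mem_biUnion]
          exact ⟨i, Finset.mem_erase.mpr ⟨by rw [hi0]; exact Ne.symm hx1ne, mem_univ _⟩, hei⟩
        · refine ⟨x0, hx0, ?_⟩
          rw [ht, Finset.mem_biUnion]
          exact ⟨i, Finset.mem_erase.mpr ⟨hi0, mem_univ _⟩, hei⟩
      have h1 : #B ≤ #D := by
        have := Finset.card_le_univ B
        rwa [Fintype.card_coe] at this
      have h2 : #D = #(univ : Finset (Σ i, V i)) - #S :=
        Finset.card_sdiff_of_subset (Finset.subset_univ S)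
      have h3 : ∑ i, Fintype.card (V i) ≤ (∑ i, (Fintype.card (V i) - s i)) + ∑ i, s i := by
        rw [← Finset.sum_add_distrib]
        exact Finset.sum_le_sum fun i _ => by omega
      have h4 : #(univ.biUnion pairs) = ∑ i, (s i).choose 2 := by
        rw [hpairs, card_pairs_biUnion S univ]
        exact Finset.sum_congr rfl fun i _ => by rw [hcards i]
      have h5 := Finset.card_le_card hsub
      omega
  obtain ⟨f, hfinj, hft⟩ := (Finset.all_card_le_biUnion_card_iff_exists_injective t).mp hall
  -- unpack pairs
  have hfx : ∀ x : {x // x ∈ D}, ∃ u v : Σ i, V i, u ∈ S ∧ v ∈ S ∧ u.1 = v.1 ∧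
      u.1 ≠ x.1.1 ∧ u ≠ v ∧ f x = {u, v} := by
    intro x
    have hm := hft x
    rw [ht, Finset.mem_biUnion] at hm
    obtain ⟨i, hi, hmem⟩ := hm
    rw [hpairs, Finset.mem_powersetCard] at hmem
    obtain ⟨u, v, huv, hpair⟩ := Finset.card_eq_two.mp hmem.2
    have hu : u ∈ S.filter (fun w => w.1 = i) :=
      hmem.1 (by rw [hpair]; exact Finset.mem_insert_self u {v})
    have hv : v ∈ S.filter (fun w => w.1 = i) :=
      hmem.1 (by rw [hpair]; exact Finset.mem_insert_of_mem (Finset.mem_singleton_self v))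
    rw [Finset.mem_filter] at hu hv
    exact ⟨u, v, hu.1, hv.1, hu.2.trans hv.2.symm,
      fun hh => (Finset.mem_erase.mp hi).1 (hu.2.symm.trans hh),
      huv, hpair⟩
  choose pu pv hpuS hpvS hpeq hpne hpne2 hfpair using hfx
  set G := completeMultipartiteGraph V with hG
  have adj1 : ∀ x : {x // x ∈ D}, G.Adj (pu x) x.1 := fun x => (cmp_adj _ _).mpr (hpne x)
  have adj2 : ∀ x : {x // x ∈ D}, G.Adj x.1 (pv x) := fun x =>
    (cmp_adj _ _).mpr (fun hh => hpne x (hh.symm ▸ (hpeq x) ▸ rfl))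
  have hdist : ∀ x : {x // x ∈ D}, G.dist (pu x) (pv x) = 2 := fun x =>
    dist_two _ _ (hpne2 x) (hpeq x) x.1 (Ne.symm (hpne x))
  set fwd : {x // x ∈ D} → ((u : Σ i, V i) × (v : Σ i, V i) × G.Walk u v) :=
    fun x => ⟨pu x, pv x, .cons (adj1 x) (.cons (adj2 x) .nil)⟩ with hfwd
  set bwd : {x // x ∈ D} → ((u : Σ i, V i) × (v : Σ i, V i) × G.Walk u v) :=
    fun x => ⟨pv x, pu x, .cons ((adj2 x).symm) (.cons ((adj1 x).symm) .nil)⟩ with hbwd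
  set Pset : Set ((u : Σ i, V i) × (v : Σ i, V i) × G.Walk u v) :=
    ((fun z : Σ i, V i => (⟨z, z, Walk.nil⟩ : (u : Σ i, V i) × (v : Σ i, V i) × G.Walk u v)) ''
      ↑S) ∪ Set.range fwd ∪ Set.range bwd with hPset
  have hfwd_supp : ∀ x, (fwd x).2.2.support = [pu x, x.1, pv x] := fun x => rfl
  have hbwd_supp : ∀ x, (bwd x).2.2.support = [pv x, x.1, pu x] := fun x => rfl
  -- pair equality gives x = x'
  have hxx : ∀ x x' : {x // x ∈ D}, pu x = pu x' → pv x = pv x' → x = x' := by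
    intro x x' h1 h2
    apply hfinj
    rw [hfpair x, hfpair x', h1, h2]
  have hxx' : ∀ x x' : {x // x ∈ D}, pu x = pv x' → pv x = pu x' → False := by
    intro x x' h1 h2
    have : f x = f x' := by
      rw [hfpair x, hfpair x', h1, h2, Finset.pair_comm]
    have hxe := hfinj this
    subst hxe
    exact hpne2 x h1
  refine ⟨Pset, ⟨?_, ?_⟩, ?_⟩
  · -- endpoints in S, shortest paths
    intro q hq
    rcases hq with (⟨z, hz, rfl⟩|⟨x, rfl⟩)|⟨x, rfl⟩
    · exact ⟨hz, hz, SimpleGraph.Walk.IsPath.nil, by simp [SimpleGraph.dist_self]⟩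
    · refine ⟨Finset.mem_coe.mpr (hpuS x), Finset.mem_coe.mpr (hpvS x), ?_, ?_⟩
      · rw [SimpleGraph.Walk.isPath_def, hfwd_supp]
        simp [(adj1 x).ne, hpne2 x, (adj2 x).ne]
      · show (Walk.cons (adj1 x) (Walk.cons (adj2 x) Walk.nil)).length = _
        simp [hdist x]
        exact (hdist x).symm
    · refine ⟨Finset.mem_coe.mpr (hpvS x), Finset.mem_coe.mpr (hpuS x), ?_, ?_⟩
      · rw [SimpleGraph.Walk.isPath_def, hbwd_supp]
        simp [((adj2 x).symm).ne, Ne.symm (hpne2 x), ((adj1 x).symm).ne]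
      · show (Walk.cons ((adj2 x).symm) (Walk.cons ((adj1 x).symm) Walk.nil)).length = _
        have := hdist x
        rw [SimpleGraph.dist_comm] at this
        simp [this]
        exact this.symm
  · -- uniqueness / reversal
    intro q hq q' hq'
    rcases hq with (⟨z, hz, rfl⟩|⟨x, rfl⟩)|⟨x, rfl⟩ <;>
      rcases hq' with (⟨z', hz', rfl⟩|⟨x', rfl⟩)|⟨x', rfl⟩
    · constructor
      · intro h
        have hzz : z = z' := h.1
        subst hzz
        rfl
      · intro h
        have hzz : z = z' := h.1
        subst hzz
        simp
    · exact ⟨fun h => absurd (h.1.symm.trans h.2) (hpne2 x'),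
        fun h => absurd (h.2.symm.trans h.1) (hpne2 x')⟩
    · exact ⟨fun h => absurd (h.2.symm.trans h.1) (hpne2 x'),
        fun h => absurd (h.1.symm.trans h.2) (hpne2 x')⟩
    · exact ⟨fun h => absurd (h.1.trans h.2.symm) (hpne2 x),
        fun h => absurd (h.1.trans h.2.symm) (hpne2 x)⟩
    · constructor
      · rintro ⟨h1, h2⟩
        obtain rfl := hxx x x' h1 h2
        rfl
      · rintro ⟨h1, h2⟩
        exact (hxx' x x' h1 h2).elim
    · constructor
      · rintro ⟨h1, h2⟩
        exact (hxx' x x' h1 h2).elim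
      · rintro ⟨h1, h2⟩
        obtain rfl := hxx x x' h1 h2
        rw [hfwd_supp, hbwd_supp]
        simp
    · exact ⟨fun h => absurd (h.2.trans h.1.symm) (hpne2 x),
        fun h => absurd (h.2.trans h.1.symm) (hpne2 x)⟩
    · constructor
      · rintro ⟨h1, h2⟩
        exact (hxx' x x' h2 h1).elim
      · rintro ⟨h1, h2⟩
        obtain rfl := hxx x x' h2 h1
        rw [hfwd_supp, hbwd_supp]
        simp
    · constructor
      · rintro ⟨h1, h2⟩
        obtain rfl := hxx x x' h2 h1
        rfl
      · rintro ⟨h1, h2⟩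
        exact (hxx' x x' h2 h1).elim
  · -- coverage
    intro w
    by_cases hw : w ∈ S
    · exact ⟨⟨w, w, Walk.nil⟩, Or.inl (Or.inl ⟨w, Finset.mem_coe.mpr hw, rfl⟩), by simp⟩
    · have hwD : w ∈ D := Finset.mem_sdiff.mpr ⟨mem_univ w, hw⟩
      exact ⟨fwd ⟨w, hwD⟩, Or.inl (Or.inr ⟨⟨w, hwD⟩, rfl⟩),
        by rw [hfwd_supp]; simp⟩

end Count

/-- Every complete multipartite graph has an optimal strong geodetic set whose
intersection with all but at most two parts is either empty or the whole part. -/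
theorem exists_optimal_sgs_two_partial_parts {ι : Type*} [Fintype ι]
    (V : ι → Type*) [∀ i, Fintype (V i)] [∀ i, Nonempty (V i)] :
    ∃ S : Set (Σ i, V i),
      IsStrongGeodeticSet (SimpleGraph.completeMultipartiteGraph V) S ∧
      S.ncard = strongGeodeticNumber (SimpleGraph.completeMultipartiteGraph V) ∧
      {i : ι | S ∩ {v : Σ j, V j | v.1 = i} ≠ ∅ ∧
               S ∩ {v : Σ j, V j | v.1 = i} ≠ {v : Σ j, V j | v.1 = i}}.ncard ≤ 2 := by
  classical
  letI : DecidableEq ι := Classical.decEq ι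
  letI : ∀ i, DecidableEq (V i) := fun i => Classical.decEq _
  set n : ι → ℕ := fun i => Fintype.card (V i) with hn
  -- the full vertex set is a strong geodetic set, so the defining set is nonempty
  obtain ⟨Sful, hSfulSGS, -⟩ := sgs_of_feas (V := V) n (fun i => le_rfl)
    (by simp [hn]) (fun j => by simp [hn])
  have hne : {k | ∃ S : Set (Σ i, V i), S.ncard = k ∧
      IsStrongGeodeticSet (SimpleGraph.completeMultipartiteGraph V) S}.Nonempty :=
    ⟨(↑Sful : Set (Σ i, V i)).ncard, ↑Sful, rfl, hSfulSGS⟩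
  obtain ⟨S0, hS0card, hS0sgs⟩ := Nat.sInf_mem hne
  set S0f := S0.toFinset with hS0f
  have hco : (↑S0f : Set (Σ i, V i)) = S0 := Set.coe_toFinset S0
  have hS0fsgs : IsStrongGeodeticSet (SimpleGraph.completeMultipartiteGraph V) ↑S0f := by
    rw [hco]; exact hS0sgs
  have hfeas := feas_of_sgs S0f hS0fsgs
  obtain ⟨s', hs'feas, hs'sum, hs'count⟩ :=
    num_exchange n (fun i => #(S0f.filter fun v => v.1 = i)) hfeas
  obtain ⟨S1, hS1sgs, hS1cards⟩ := sgs_of_feas s' hs'feas.1 hs'feas.2.1 hs'feas.2.2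
  have hS1card : #S1 = ∑ i, s' i := by
    rw [Finset.card_eq_sum_card_fiberwise (f := Sigma.fst) (t := Finset.univ)
      (fun x _ => Finset.mem_univ x.1)]
    exact Finset.sum_congr rfl fun i _ => hS1cards i
  have hS0fcard : #S0f = ∑ i, #(S0f.filter fun v => v.1 = i) := by
    rw [Finset.card_eq_sum_card_fiberwise (f := Sigma.fst) (t := Finset.univ)
      (fun x _ => Finset.mem_univ x.1)]
  have hkey : (↑S1 : Set (Σ i, V i)).ncard
      = strongGeodeticNumber (SimpleGraph.completeMultipartiteGraph V) := by
    rw [Set.ncard_coe_finset, hS1card, hs'sum, ← hS0fcard]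
    have h4 : #S0f = S0.ncard := (Set.ncard_eq_toFinset_card' S0).symm
    rw [h4, hS0card]
    rfl
  refine ⟨↑S1, hS1sgs, hkey, ?_⟩
  have hsub : {i : ι | (↑S1 : Set (Σ j, V j)) ∩ {v : Σ j, V j | v.1 = i} ≠ ∅ ∧
      (↑S1 : Set (Σ j, V j)) ∩ {v : Σ j, V j | v.1 = i} ≠ {v : Σ j, V j | v.1 = i}}
      ⊆ ↑(Finset.univ.filter fun i => 0 < s' i ∧ s' i < n i) := by
    intro i hi
    simp only [Set.mem_setOf_eq] at hi
    simp only [Finset.coe_filter, Finset.mem_univ, true_and, Set.mem_setOf_eq]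
    constructor
    · -- if s' i = 0 the intersection is empty
      by_contra h0
      push_neg at h0
      have hz : s' i = 0 := by omega
      have hfe : S1.filter (fun v => v.1 = i) = ∅ :=
        Finset.card_eq_zero.mp (by rw [hS1cards i, hz])
      apply hi.1
      ext v
      simp only [Set.mem_inter_iff, Set.mem_setOf_eq, Set.mem_empty_iff_false, iff_false]
      rintro ⟨hv1, hv2⟩
      have : v ∈ S1.filter (fun v => v.1 = i) :=
        Finset.mem_filter.mpr ⟨Finset.mem_coe.mp hv1, hv2⟩
      rw [hfe] at this
      exact absurd this (Finset.notMem_empty v)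
    · -- if s' i = n i the intersection is the whole part
      have hlei := hs'feas.1 i
      by_contra h0
      push_neg at h0
      have hzz : s' i = n i := by omega
      have hsub2 : S1.filter (fun v => v.1 = i)
          ⊆ (Finset.univ : Finset (Σ j, V j)).filter (fun v => v.1 = i) :=
        Finset.filter_subset_filter _ (Finset.subset_univ S1)
      have hfeq : S1.filter (fun v => v.1 = i)
          = (Finset.univ : Finset (Σ j, V j)).filter (fun v => v.1 = i) := by
        apply Finset.eq_of_subset_of_card_le hsub2
        rw [card_part i, hS1cards i, hzz]
      apply hi.2
      ext v
      simp only [Set.mem_inter_iff, Set.mem_setOf_eq]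
      constructor
      · rintro ⟨-, hv2⟩; exact hv2
      · intro hv2
        have hvm : v ∈ (Finset.univ : Finset (Σ j, V j)).filter (fun v => v.1 = i) :=
          Finset.mem_filter.mpr ⟨Finset.mem_univ v, hv2⟩
        rw [← hfeq] at hvm
        exact ⟨Finset.mem_coe.mpr (Finset.mem_of_mem_filter v hvm), hv2⟩
  calc ({i : ι | (↑S1 : Set (Σ j, V j)) ∩ {v : Σ j, V j | v.1 = i} ≠ ∅ ∧
          (↑S1 : Set (Σ j, V j)) ∩ {v : Σ j, V j | v.1 = i} ≠ {v : Σ j, V j | v.1 = i}}).ncard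
      ≤ (↑(Finset.univ.filter fun i => 0 < s' i ∧ s' i < n i) : Set ι).ncard :=
        Set.ncard_le_ncard hsub (Finset.finite_toSet _)
    _ = #(Finset.univ.filter fun i => 0 < s' i ∧ s' i < n i) := Set.ncard_coe_finset _
    _ ≤ 2 := hs'count
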